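/- In the free associative algebra Q⟨x,y⟩, the subspace of polynomials f with ∂_x(f) = 0 (where ∂_x is the derivation dual to x, deleting one occurrence of x) coincides with the subalgebra generated by C_i = ad(x)^{i−1}(y) for i ≥ 1, and the C_i generate this subalgebra freely. -/

import Mathlib

noncomputable section

/-- `ℚ⟨x,y⟩`: the free associative algebra on two generators `x`, `y`. -/
abbrev FA := FreeAlgebra ℚ Bool

/-- The generator `x`. -/
def Xgen : FA := FreeAlgebra.ι ℚ true

/-- The generator `y`. -/
def Ygen : FA := FreeAlgebra.ι ℚ false

/-- `C_{i+1} = ad(x)^i(y)`, i.e. `C 0 = y` and `C (i+1) = [x, C i]`. -/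
def Cgen : ℕ → FA
  | 0 => Ygen
  | (i + 1) => Xgen * Cgen i - Cgen i * Xgen

/-- The algebra map from the free algebra on countably many generators sending the
`i`-th generator to `C_{i+1}`. -/
def Cmap : FreeAlgebra ℚ ℕ →ₐ[ℚ] FA := FreeAlgebra.lift ℚ (fun i => Cgen i)

abbrev A := FreeAlgebra ℚ ℕ
abbrev V := ℕ →₀ A
def cg (i : ℕ) : A := FreeAlgebra.ι ℚ i
def Δ : A →ₐ[ℚ] TrivSqZeroExt A A :=
  FreeAlgebra.lift ℚ (fun i => TrivSqZeroExt.inl (cg i) + TrivSqZeroExt.inr (cg (i+1)))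
def dA : A →ₗ[ℚ] A where
  toFun a := (Δ a).snd
  map_add' a b := by simp
  map_smul' q a := by simp
lemma fst_Δ (a : A) : (Δ a).fst = a := by
  have : (TrivSqZeroExt.fstHom ℚ A A).comp Δ = AlgHom.id ℚ A := by
    apply FreeAlgebra.hom_ext
    funext i
    simp [Δ, cg, FreeAlgebra.lift_ι_apply]
  exact congrArg (fun f => f a) (congrArg (fun (g : A →ₐ[ℚ] A) => g.toFun) this)
lemma dA_mul (a b : A) : dA (a * b) = a * dA b + dA a * b := by
  show (Δ (a*b)).snd = _
  rw [map_mul, TrivSqZeroExt.snd_mul, fst_Δ, fst_Δ]; rfl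
lemma dA_ι (i : ℕ) : dA (FreeAlgebra.ι ℚ i) = FreeAlgebra.ι ℚ (i+1) := by
  show (Δ (FreeAlgebra.ι ℚ i)).snd = _
  simp [Δ, cg, FreeAlgebra.lift_ι_apply]
lemma dA_one : dA 1 = 0 := by
  show (Δ 1).snd = 0
  rw [map_one]; rfl
lemma dA_algebraMap (q : ℚ) : dA (algebraMap ℚ A q) = 0 := by
  show (Δ (algebraMap ℚ A q)).snd = 0
  rw [AlgHom.commutes]
  simp [TrivSqZeroExt.algebraMap_eq_inl']

lemma Cmap_ι (i : ℕ) : Cmap (FreeAlgebra.ι ℚ i) = Cgen i := by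
  simp [Cmap, cg, FreeAlgebra.lift_ι_apply]

lemma x_comm (v : A) : Xgen * Cmap v = Cmap v * Xgen + Cmap (dA v) := by
  induction v using FreeAlgebra.induction with
  | grade0 q =>
      rw [dA_algebraMap, map_zero, add_zero, AlgHom.commutes]
      exact (Algebra.commutes q Xgen).symm
  | grade1 i =>
      rw [Cmap_ι, dA_ι, Cmap_ι]
      show _ = Cgen i * Xgen + (Xgen * Cgen i - Cgen i * Xgen)
      noncomm_ring
  | mul a b ha hb =>
      rw [map_mul, ← mul_assoc, ha, dA_mul, map_add, map_mul, map_mul]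
      rw [add_mul, mul_assoc, hb]
      noncomm_ring
  | add a b ha hb =>
      rw [map_add, mul_add, ha, hb, map_add, map_add]
      noncomm_ring

-- the representation on V = ℕ →₀ A
def shiftV : V →ₗ[ℚ] V := Finsupp.lmapDomain A ℚ (· + 1)
def dV : V →ₗ[ℚ] V := Finsupp.mapRange.linearMap dA
def Lsm : A →ₐ[ℚ] Module.End ℚ V := Algebra.lsmul ℚ ℚ V
def ρ : FA →ₐ[ℚ] Module.End ℚ V :=
  FreeAlgebra.lift ℚ (fun b => if b then shiftV + dV else Lsm (cg 0))

lemma smul_single_V (a : A) (n : ℕ) (b : A) :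
    a • (Finsupp.single n b : V) = Finsupp.single n (a * b) := by
  rw [Finsupp.smul_single]; rfl

lemma shift_Lsm (a : A) : shiftV ∘ₗ (Lsm a : V →ₗ[ℚ] V) = (Lsm a : V →ₗ[ℚ] V) ∘ₗ shiftV := by
  apply Finsupp.lhom_ext
  intro n b
  simp only [LinearMap.comp_apply, Lsm, Algebra.lsmul_coe, smul_single_V, shiftV,
    Finsupp.lmapDomain_apply, Finsupp.mapDomain_single]

lemma dV_Lsm (a : A) : dV ∘ₗ (Lsm a : V →ₗ[ℚ] V)
    = (Lsm a : V →ₗ[ℚ] V) ∘ₗ dV + (Lsm (dA a) : V →ₗ[ℚ] V) := by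
  apply Finsupp.lhom_ext
  intro n b
  simp only [LinearMap.comp_apply, LinearMap.add_apply, Lsm, Algebra.lsmul_coe, dV,
    Finsupp.mapRange.linearMap_apply, Finsupp.mapRange_single, smul_single_V, dA_mul,
    Finsupp.single_add]

lemma ρ_x : ρ Xgen = shiftV + dV := by simp [ρ, Xgen, FreeAlgebra.lift_ι_apply]
lemma ρ_y : ρ Ygen = Lsm (cg 0) := by simp [ρ, Ygen, FreeAlgebra.lift_ι_apply]

lemma ρ_Cgen (i : ℕ) : ρ (Cgen i) = Lsm (cg i) := by
  induction i with
  | zero => exact ρ_y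
  | succ i ih =>
      show ρ (Xgen * Cgen i - Cgen i * Xgen) = _
      rw [map_sub, map_mul, map_mul, ρ_x, ih]
      have h1 : ((shiftV + dV) * Lsm (cg i) : Module.End ℚ V)
          = shiftV ∘ₗ (Lsm (cg i) : V →ₗ[ℚ] V) + dV ∘ₗ (Lsm (cg i) : V →ₗ[ℚ] V) := by
        ext v; simp [LinearMap.add_apply, Module.End.mul_eq_comp]
      have h2 : (Lsm (cg i) * (shiftV + dV) : Module.End ℚ V)
          = (Lsm (cg i) : V →ₗ[ℚ] V) ∘ₗ shiftV + (Lsm (cg i) : V →ₗ[ℚ] V) ∘ₗ dV := by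
        ext v; simp [LinearMap.add_apply, Module.End.mul_eq_comp]
      rw [h1, h2, shift_Lsm, dV_Lsm]
      have : dA (cg i) = cg (i+1) := dA_ι i
      rw [this]
      abel

lemma ρ_Cmap : ρ.comp Cmap = Lsm := by
  apply FreeAlgebra.hom_ext
  funext i
  show ρ (Cmap (FreeAlgebra.ι ℚ i)) = Lsm (FreeAlgebra.ι ℚ i)
  rw [Cmap_ι, ρ_Cgen]; rfl

def evL : FA →ₗ[ℚ] V where
  toFun f := ρ f (Finsupp.single 0 1)
  map_add' a b := by simp
  map_smul' q a := by simp

lemma ρ_pow (n : ℕ) : ρ (Xgen ^ n) (Finsupp.single 0 1) = Finsupp.single n 1 := by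
  induction n with
  | zero => simp
  | succ n ih =>
      rw [pow_succ', map_mul]
      show ρ Xgen (ρ (Xgen ^ n) (Finsupp.single 0 1)) = _
      rw [ih, ρ_x]
      show shiftV (Finsupp.single n 1) + dV (Finsupp.single n 1) = _
      simp only [shiftV, dV, Finsupp.lmapDomain_apply, Finsupp.mapDomain_single,
        Finsupp.mapRange.linearMap_apply, Finsupp.mapRange_single, dA_one,
        Finsupp.single_zero, add_zero]

lemma evL_main (u : A) (n : ℕ) :
    evL (Cmap u * Xgen ^ n) = Finsupp.single n u := by
  show ρ (Cmap u * Xgen ^ n) (Finsupp.single 0 1) = _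
  rw [map_mul]
  show ρ (Cmap u) (ρ (Xgen ^ n) (Finsupp.single 0 1)) = _
  rw [ρ_pow]
  have : ρ (Cmap u) = Lsm u := congrArg (fun f => f u) (congrArg DFunLike.coe ρ_Cmap)
  rw [this]
  show u • (Finsupp.single n 1 : V) = _
  rw [smul_single_V, mul_one]

def σmap : V →ₗ[ℚ] FA :=
  Finsupp.lsum ℚ (fun n => (LinearMap.mulRight ℚ (Xgen ^ n)).comp Cmap.toLinearMap)

lemma σ_single (n : ℕ) (u : A) : σmap (Finsupp.single n u) = Cmap u * Xgen ^ n := by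
  simp [σmap, Finsupp.lsum_single]

lemma evL_σ : evL ∘ₗ σmap = LinearMap.id := by
  apply Finsupp.lhom_ext
  intro n u
  simp [LinearMap.comp_apply, σ_single, evL_main]

lemma σ_inj : Function.Injective σmap := by
  intro p q h
  have : evL (σmap p) = evL (σmap q) := by rw [h]
  simpa using (congrArg (fun f => f p) evL_σ).symm.trans
    ((congrArg evL h).trans (congrArg (fun f => f q) evL_σ))

lemma x_mul_σ (p : V) : Xgen * σmap p ∈ LinearMap.range σmap := by
  induction p using Finsupp.induction with
  | zero => rw [map_zero, mul_zero]; exact zero_mem _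
  | single_add n u p hn hu ih =>
      rw [map_add, mul_add]
      refine add_mem ?_ ih
      refine ⟨Finsupp.single (n+1) u + Finsupp.single n (dA u), ?_⟩
      rw [map_add, σ_single, σ_single, σ_single, ← mul_assoc, x_comm, add_mul,
        mul_assoc, ← pow_succ']

lemma xpow_mul_σ (k : ℕ) (p : V) : Xgen ^ k * σmap p ∈ LinearMap.range σmap := by
  induction k with
  | zero => rw [pow_zero, one_mul]; exact ⟨p, rfl⟩
  | succ k ih =>
      obtain ⟨q, hq⟩ := ih
      rw [pow_succ', mul_assoc, ← hq]
      exact x_mul_σ q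

lemma Cmul_σ (u : A) (p : V) : Cmap u * σmap p ∈ LinearMap.range σmap := by
  induction p using Finsupp.induction with
  | zero => rw [map_zero, mul_zero]; exact zero_mem _
  | single_add n v p hn hv ih =>
      rw [map_add, mul_add]
      refine add_mem ?_ ih
      refine ⟨Finsupp.single n (u * v), ?_⟩
      rw [σ_single, σ_single, map_mul, mul_assoc]

lemma σ_surj : Function.Surjective σmap := by
  intro f
  suffices h : f ∈ LinearMap.range σmap by exact h
  induction f using FreeAlgebra.induction with
  | grade0 q =>
      refine ⟨Finsupp.single 0 (algebraMap ℚ A q), ?_⟩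
      rw [σ_single, pow_zero, mul_one, AlgHom.commutes]
  | grade1 b =>
      cases b
      · refine ⟨Finsupp.single 0 (cg 0), ?_⟩
        rw [σ_single, pow_zero, mul_one]
        show Cmap (FreeAlgebra.ι ℚ 0) = _
        rw [Cmap_ι]; rfl
      · exact ⟨Finsupp.single 1 1, by rw [σ_single, pow_one, map_one, one_mul]; rfl⟩
  | mul a b ha hb =>
      obtain ⟨p, rfl⟩ := ha
      obtain ⟨q, rfl⟩ := hb
      induction p using Finsupp.induction with
      | zero => rw [map_zero, zero_mul]; exact zero_mem _
      | single_add n u p hn hu ih =>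
          rw [map_add, add_mul]
          refine add_mem ?_ ih
          rw [σ_single, mul_assoc]
          obtain ⟨r, hr⟩ := xpow_mul_σ n q
          rw [← hr]
          exact Cmul_σ u r
  | add a b ha hb => exact add_mem ha hb

def der : V →ₗ[ℚ] V :=
  Finsupp.lsum ℚ (fun n => Nat.casesOn n 0 (fun m => (((m : ℚ)+1) • Finsupp.lsingle m)))

lemma der_single_zero (u : A) : der (Finsupp.single 0 u) = 0 := by
  simp [der, Finsupp.lsum_single]

lemma der_single_succ (m : ℕ) (u : A) :
    der (Finsupp.single (m+1) u) = ((m : ℚ)+1) • Finsupp.single m u := by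
  simp [der, Finsupp.lsum_single, Finsupp.smul_single]

lemma der_apply (p : V) (m : ℕ) : der p m = ((m : ℚ)+1) • p (m+1) := by
  induction p using Finsupp.induction with
  | zero => simp
  | single_add n u p hn hu ih =>
      rw [map_add, Finsupp.add_apply, Finsupp.add_apply, ih, smul_add]
      congr 1
      cases n with
      | zero =>
          rw [der_single_zero]
          simp [Finsupp.single_apply]
      | succ k =>
          rw [der_single_succ, Finsupp.smul_apply, Finsupp.single_apply, Finsupp.single_apply]
          by_cases hk : k = m
          · subst hk; simp
          · simp [hk, fun h => hk (Nat.succ_injective h)]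

section Dlem
variable (D : FA →ₗ[ℚ] FA) (hD : ∀ a b : FA, D (a * b) = D a * b + a * D b)
    (hDx : D Xgen = 1) (hDy : D Ygen = 0)

include hD in
lemma D_one : D 1 = 0 := by
  have h := hD 1 1
  rw [mul_one, one_mul, mul_one] at h
  exact left_eq_add.mp h

include hD hDx hDy in
lemma D_Cgen (i : ℕ) : D (Cgen i) = 0 := by
  induction i with
  | zero => exact hDy
  | succ i ih =>
      show D (Xgen * Cgen i - Cgen i * Xgen) = 0
      rw [map_sub, hD, hD, hDx, ih]
      noncomm_ring

include hD hDx hDy in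
lemma D_Cmap (u : A) : D (Cmap u) = 0 := by
  induction u using FreeAlgebra.induction with
  | grade0 q =>
      rw [AlgHom.commutes, Algebra.algebraMap_eq_smul_one, map_smul,
        D_one D hD, smul_zero]
  | grade1 i => rw [Cmap_ι, D_Cgen D hD hDx hDy]
  | mul a b ha hb => rw [map_mul, hD, ha, hb]; noncomm_ring
  | add a b ha hb => rw [map_add, map_add, ha, hb, add_zero]

include hD hDx in
lemma D_pow (n : ℕ) : D (Xgen ^ (n+1)) = ((n : ℚ)+1) • Xgen ^ n := by
  induction n with
  | zero => rw [pow_one, hDx, pow_zero]; norm_num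
  | succ n ih =>
      rw [pow_succ, hD, ih, hDx, mul_one, smul_mul_assoc, ← pow_succ]
      push_cast
      module

include hD hDx hDy in
lemma D_σ (p : V) : D (σmap p) = σmap (der p) := by
  have h : D ∘ₗ σmap = σmap ∘ₗ der := by
    apply Finsupp.lhom_ext
    intro n u
    cases n with
    | zero =>
        rw [LinearMap.comp_apply, LinearMap.comp_apply, σ_single, pow_zero, mul_one,
          D_Cmap D hD hDx hDy, der_single_zero, map_zero]
    | succ m =>
        rw [LinearMap.comp_apply, LinearMap.comp_apply, σ_single, hD,
          D_Cmap D hD hDx hDy, zero_mul, zero_add, D_pow D hD hDx,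
          der_single_succ, map_smul, σ_single]
        rw [mul_smul_comm]
  exact congrArg (fun f => f p) (congrArg DFunLike.coe h)

end Dlem


/-- for the derivation `∂ₓ` of `ℚ⟨x,y⟩` with `∂ₓ(x) = 1`, `∂ₓ(y) = 0`, the
subspace `ker ∂ₓ` coincides with the subalgebra generated by the `C_i = ad(x)^{i−1}(y)`,
and the `C_i` generate it freely. -/
theorem kernel_of_del_x_is_free_on_C (D : FA →ₗ[ℚ] FA)
    (hD : ∀ a b : FA, D (a * b) = D a * b + a * D b)
    (hDx : D Xgen = 1) (hDy : D Ygen = 0) :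
    Function.Injective Cmap ∧ Set.range Cmap = {f : FA | D f = 0} := by
  have hσC : ∀ u : A, σmap (Finsupp.single 0 u) = Cmap u := by
    intro u
    rw [σ_single, pow_zero, mul_one]
  constructor
  · intro u v h
    have h2 : σmap (Finsupp.single 0 u) = σmap (Finsupp.single 0 v) := by
      rw [hσC, hσC, h]
    exact Finsupp.single_injective 0 (σ_inj h2)
  · ext f
    constructor
    · rintro ⟨u, rfl⟩
      exact D_Cmap D hD hDx hDy u
    · intro hf
      obtain ⟨p, rfl⟩ := σ_surj f
      have h0 : σmap (der p) = 0 := by rw [← D_σ D hD hDx hDy]; exact hf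
      have hder : der p = 0 := σ_inj (by rw [h0, map_zero])
      have hp : p = Finsupp.single 0 (p 0) := by
        ext m
        cases m with
        | zero => simp
        | succ m =>
            have := der_apply p m
            rw [hder] at this
            simp only [Finsupp.coe_zero, Pi.zero_apply] at this
            have hm : ((m : ℚ)+1) ≠ 0 := by positivity
            have : p (m+1) = 0 := by
              rcases smul_eq_zero.mp this.symm with h | h
              · exact absurd h hm
              · exact h
            rw [this, Finsupp.single_apply]
            simp
      exact ⟨p 0, by rw [← hσC, ← hp]⟩

end
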